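/- Let D be a triangulated category and let B, C be strict full triangulated subcategories of D with Hom_D(B,C) = 0 for all B ∈ B, C ∈ C. Assume that for every object A of D there exists a distinguished triangle B → A → C → B[1] with B ∈ B and C ∈ C. Then the inclusion functor j_* : C → D admits a left adjoint j^* : D → C. -/

import Mathlib

open CategoryTheory Limits Pretriangulated

universe v u

namespace CategoryTheory.Triangulated

/-- A triangulated subcategory (the structure `Triangulated.Subcategory` of the older Mathlib). -/
structure Subcategory (C : Type*) [Category C] [HasZeroObject C] [HasShift C ℤ] [Preadditive C]
    [∀ n : ℤ, (shiftFunctor C n).Additive] [Pretriangulated C] where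
  P : C → Prop
  zero' : ∃ (Z : C) (_ : IsZero Z), P Z
  shift (X : C) (n : ℤ) : P X → P (X⟦n⟧)
  ext₂' (T : Triangle C) (_ : T ∈ distTriang C) : P T.obj₁ → P T.obj₃ →
    ObjectProperty.isoClosure P T.obj₂

end CategoryTheory.Triangulated

/-- For a semiorthogonal pair `(B, C)` of strict full triangulated subcategories of a
triangulated category `D` such that every object admits a decomposition triangle
`B → A → C → B[1]`, the inclusion `j_* : C → D` admits a left adjoint. -/
theorem inclusion_right_part_isRightAdjoint
    {D : Type u} [Category.{v} D] [HasZeroObject D] [HasShift D ℤ] [Preadditive D]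
    [∀ n : ℤ, (shiftFunctor D n).Additive] [Pretriangulated D] [IsTriangulated D]
    (B C : Triangulated.Subcategory D)
    [ObjectProperty.IsClosedUnderIsomorphisms B.P] [ObjectProperty.IsClosedUnderIsomorphisms C.P]
    (horth : ∀ (X Y : D), B.P X → C.P Y → ∀ f : X ⟶ Y, f = 0)
    (hdec : ∀ A : D, ∃ (X Y : D) (f : X ⟶ A) (g : A ⟶ Y) (h : Y ⟶ X⟦(1 : ℤ)⟧),
      B.P X ∧ C.P Y ∧ Triangle.mk f g h ∈ distTriang D) :
    (ObjectProperty.ι C.P).IsRightAdjoint := by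
  have : ∀ A : D, HasInitial (StructuredArrow A (ObjectProperty.ι C.P)) := by
    intro A
    obtain ⟨X, Y, f, g, h, hX, hY, hT⟩ := hdec A
    let I : StructuredArrow A (ObjectProperty.ι C.P) :=
      StructuredArrow.mk (Y := ⟨Y, hY⟩) (show A ⟶ (ObjectProperty.ι C.P).obj ⟨Y, hY⟩ from g)
    have key : ∀ (Z : ObjectProperty.FullSubcategory C.P) (a : A ⟶ Z.1), ∃! t : Y ⟶ Z.1, g ≫ t = a := by
      intro Z a
      obtain ⟨t, ht⟩ := Triangle.yoneda_exact₂ _ hT a (horth X Z.1 hX Z.2 (f ≫ a))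
      let u : Y ⟶ Z.1 := t
      have htu : a = g ≫ u := ht
      refine ⟨u, htu.symm, fun t' ht' => ?_⟩
      have hz : g ≫ (t' - u) = 0 := by
        rw [Preadditive.comp_sub, ht', ← htu, sub_self]
      obtain ⟨s, hs⟩ := Triangle.yoneda_exact₃ _ hT (t' - u) hz
      replace hs : t' - u = 0 := hs.trans (by rw [horth _ _ (B.shift X 1 hX) Z.2 s]; exact comp_zero)
      exact sub_eq_zero.mp hs
    have hI : IsInitial I := by
      refine IsInitial.ofUniqueHom (fun Z => ?_) (fun Z m => ?_)
      · exact StructuredArrow.homMk (ObjectProperty.homMk (key Z.right Z.hom).choose)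
          (by exact (key Z.right Z.hom).choose_spec.1)
      · ext
        exact (key Z.right Z.hom).choose_spec.2 m.right.hom
          (by have := m.w; simp [I] at this; exact this)
    exact hI.hasInitial
  exact isRightAdjointOfStructuredArrowInitials _
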